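/- Let T̅, T̅' be upper transition operators with Dₙ = d(T̅ⁿ, T̅'ⁿ) and ρᵢ = ρ(T̅ⁱ). Then Dₙ ≤ D₁ · Σ_{i=0}^{n-1} ρᵢ for all n ≥ 1. -/

import Mathlib

open Finset Set

noncomputable section

/-- Functions with values in [0,1]. -/
def L1 (X : Type*) : Set (X → ℝ) := {f | ∀ x, 0 ≤ f x ∧ f x ≤ 1}

/-- Probability mass function on a finite set. -/
def IsPMF {X : Type*} [Fintype X] (p : X → ℝ) : Prop :=
  (∀ x, 0 ≤ p x) ∧ ∑ x, p x = 1

/-- A credal set: nonempty compact convex set of pmfs. -/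
def IsCredal {X : Type*} [Fintype X] (M : Set (X → ℝ)) : Prop :=
  M.Nonempty ∧ IsCompact M ∧ Convex ℝ M ∧ ∀ p ∈ M, IsPMF p

/-- Linear expectation with respect to a pmf. -/
def linExp {X : Type*} [Fintype X] (p f : X → ℝ) : ℝ := ∑ x, p x * f x

/-- Upper expectation functional of a credal set. -/
def upperExp {X : Type*} [Fintype X] (M : Set (X → ℝ)) (f : X → ℝ) : ℝ :=
  sSup ((fun p => linExp p f) '' M)

/-- Lower expectation functional of a credal set. -/
def lowerExp {X : Type*} [Fintype X] (M : Set (X → ℝ)) (f : X → ℝ) : ℝ :=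
  sInf ((fun p => linExp p f) '' M)

/-- Chebyshev (sup) distance between functions. -/
def dCheb {X : Type*} (f g : X → ℝ) : ℝ := ⨆ x, |f x - g x|

/-- Distance between two (upper) expectation functionals. -/
def dFun {X : Type*} (F G : (X → ℝ) → ℝ) : ℝ :=
  sSup ((fun f => |F f - G f|) '' L1 X)

/-- Distance between an upper and a lower expectation functional. -/
def dUL {X : Type*} (F G : (X → ℝ) → ℝ) : ℝ :=
  sSup ((fun f => F f - G f) '' L1 X)

/-- Upper transition operator: rows are upper expectation functionals. -/
def IsUpperTrans {X : Type*} [Fintype X] (T : (X → ℝ) → (X → ℝ)) : Prop :=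
  ∃ M : X → Set (X → ℝ), (∀ x, IsCredal (M x)) ∧ ∀ f x, T f x = upperExp (M x) f

/-- Matching pair of upper and lower transition operators from the same credal sets. -/
def IsTransPair {X : Type*} [Fintype X] (T Tl : (X → ℝ) → (X → ℝ)) : Prop :=
  ∃ M : X → Set (X → ℝ), (∀ x, IsCredal (M x)) ∧
    (∀ f x, T f x = upperExp (M x) f) ∧ (∀ f x, Tl f x = lowerExp (M x) f)

/-- Distance between two (upper) transition operators. -/
def dOp {X : Type*} (T T' : (X → ℝ) → (X → ℝ)) : ℝ :=
  sSup ((fun f => dCheb (T f) (T' f)) '' L1 X)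

/-- Imprecision distance between an upper and a lower transition operator. -/
def dOpUL {X : Type*} (T Tl : (X → ℝ) → (X → ℝ)) : ℝ :=
  sSup ((fun f => ⨆ x, (T f x - Tl f x)) '' L1 X)

/-- Weak coefficient of ergodicity. -/
def rho {X : Type*} (T : (X → ℝ) → (X → ℝ)) : ℝ :=
  sSup {r | ∃ f ∈ L1 X, ∃ x y : X, r = |T f x - T f y|}

section helpers
variable {X : Type*} [Fintype X]

lemma linExp_continuous (f : X → ℝ) : Continuous fun p : X → ℝ => linExp p f := by
  unfold linExp
  exact continuous_finset_sum _ fun x _ => (continuous_apply x).mul continuous_const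

lemma img_nonempty {M : Set (X → ℝ)} (hM : IsCredal M) (f : X → ℝ) :
    ((fun p => linExp p f) '' M).Nonempty := hM.1.image _

lemma img_bddAbove {M : Set (X → ℝ)} (hM : IsCredal M) (f : X → ℝ) :
    BddAbove ((fun p => linExp p f) '' M) :=
  (hM.2.1.image (linExp_continuous f)).bddAbove

lemma linExp_mono {p f g : X → ℝ} (hp : IsPMF p) (h : ∀ x, f x ≤ g x) :
    linExp p f ≤ linExp p g :=
  Finset.sum_le_sum fun x _ => mul_le_mul_of_nonneg_left (h x) (hp.1 x)

lemma upperExp_mono {M : Set (X → ℝ)} (hM : IsCredal M) {f g : X → ℝ}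
    (h : ∀ x, f x ≤ g x) : upperExp M f ≤ upperExp M g := by
  apply csSup_le (img_nonempty hM f)
  rintro a ⟨p, hp, rfl⟩
  exact le_trans (linExp_mono (hM.2.2.2 p hp) h) (le_csSup (img_bddAbove hM g) ⟨p, hp, rfl⟩)

lemma linExp_affine {p : X → ℝ} (hp : IsPMF p) (c r : ℝ) (w : X → ℝ) :
    linExp p (fun x => c + r * w x) = c + r * linExp p w := by
  unfold linExp
  rw [Finset.sum_congr rfl (fun x _ => by ring :
    ∀ x ∈ Finset.univ, p x * (c + r * w x) = p x * c + r * (p x * w x)),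
    Finset.sum_add_distrib, ← Finset.sum_mul, hp.2, ← Finset.mul_sum, one_mul]

lemma upperExp_affine {M : Set (X → ℝ)} (hM : IsCredal M) (c : ℝ) {r : ℝ} (hr : 0 ≤ r)
    (w : X → ℝ) : upperExp M (fun x => c + r * w x) = c + r * upperExp M w := by
  have himg : (fun p => linExp p (fun x => c + r * w x)) '' M
      = (fun t => c + r * t) '' ((fun p => linExp p w) '' M) := by
    rw [Set.image_image]
    exact Set.image_congr fun p hp => linExp_affine (hM.2.2.2 p hp) c r w
  unfold upperExp
  rw [himg]
  have hm : Monotone fun t : ℝ => c + r * t := fun a b hab => add_le_add le_rfl (mul_le_mul_of_nonneg_left hab hr)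
  exact (hm.map_csSup_of_continuousAt (by fun_prop) (img_nonempty hM w)
    (img_bddAbove hM w)).symm

lemma upperExp_mem_L1 {M : Set (X → ℝ)} (hM : IsCredal M) {f : X → ℝ} (hf : f ∈ L1 X) :
    0 ≤ upperExp M f ∧ upperExp M f ≤ 1 := by
  obtain ⟨p, hp⟩ := hM.1
  have h01 : ∀ q ∈ M, 0 ≤ linExp q f ∧ linExp q f ≤ 1 := by
    intro q hq
    have hpmf := hM.2.2.2 q hq
    constructor
    · exact Finset.sum_nonneg fun x _ => mul_nonneg (hpmf.1 x) (hf x).1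
    · calc linExp q f ≤ ∑ x, q x * 1 :=
            Finset.sum_le_sum fun x _ => mul_le_mul_of_nonneg_left (hf x).2 (hpmf.1 x)
        _ = 1 := by simp [hpmf.2]
  refine ⟨le_trans (h01 p hp).1 (le_csSup (img_bddAbove hM f) ⟨p, hp, rfl⟩), ?_⟩
  exact csSup_le (img_nonempty hM f) (by rintro a ⟨q, hq, rfl⟩; exact (h01 q hq).2)

end helpers

theorem stmt13 {X : Type*} [Fintype X] [Nonempty X]
    (T T' : (X → ℝ) → (X → ℝ)) (hT : IsUpperTrans T) (hT' : IsUpperTrans T')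
    (n : ℕ) (hn : 1 ≤ n) :
    dOp (T^[n]) (T'^[n]) ≤ dOp T T' * ∑ i ∈ Finset.range n, rho (T^[i]) := by
  obtain ⟨M, hMc, hMT⟩ := hT
  obtain ⟨M', hM'c, hM'T⟩ := hT'
  set D := dOp T T' with hDdef
  -- T and T' map L1 into L1
  have hTL1 : ∀ f ∈ L1 X, T f ∈ L1 X := fun f hf x => by
    rw [hMT]; exact upperExp_mem_L1 (hMc x) hf
  have hT'L1 : ∀ f ∈ L1 X, T' f ∈ L1 X := fun f hf x => by
    rw [hM'T]; exact upperExp_mem_L1 (hM'c x) hf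
  have hTiter : ∀ i, ∀ f ∈ L1 X, T^[i] f ∈ L1 X := by
    intro i
    induction i with
    | zero => intro f hf; simpa using hf
    | succ k ih => intro f hf; rw [Function.iterate_succ_apply]; exact ih _ (hTL1 f hf)
  have hT'iter : ∀ i, ∀ f ∈ L1 X, T'^[i] f ∈ L1 X := by
    intro i
    induction i with
    | zero => intro f hf; simpa using hf
    | succ k ih => intro f hf; rw [Function.iterate_succ_apply]; exact ih _ (hT'L1 f hf)
  have h0L1 : (fun _ : X => (0 : ℝ)) ∈ L1 X := fun x => ⟨le_refl 0, zero_le_one⟩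
  -- dCheb (T f) (T' f) ≤ D for f ∈ L1
  have hdOpBdd : BddAbove ((fun f => dCheb (T f) (T' f)) '' L1 X) := by
    refine ⟨1, ?_⟩
    rintro a ⟨g, hg, rfl⟩
    refine ciSup_le fun x => ?_
    have h1 := hTL1 g hg x; have h2 := hT'L1 g hg x
    rw [abs_le]; exact ⟨by linarith [h1.1, h2.2], by linarith [h1.2, h2.1]⟩
  have hChebD : ∀ f ∈ L1 X, ∀ x, |T f x - T' f x| ≤ D := by
    intro f hf x
    have h1 : |T f x - T' f x| ≤ dCheb (T f) (T' f) :=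
      le_ciSup (f := fun x => |T f x - T' f x|) (Finite.bddAbove_range _) x
    exact h1.trans (le_csSup hdOpBdd ⟨f, hf, rfl⟩)
  have hD0 : 0 ≤ D :=
    le_trans (abs_nonneg _) (hChebD _ h0L1 (Classical.arbitrary X))
  -- rho facts
  have hrho_bdd : ∀ i,
      BddAbove {r | ∃ f ∈ L1 X, ∃ x y : X, r = |T^[i] f x - T^[i] f y|} := by
    intro i
    refine ⟨1, ?_⟩
    rintro a ⟨f, hf, x, y, rfl⟩
    have h1 := hTiter i f hf x; have h2 := hTiter i f hf y
    rw [abs_le]; exact ⟨by linarith [h1.1, h2.2], by linarith [h1.2, h2.1]⟩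
  have hrho_var : ∀ i, ∀ f ∈ L1 X, ∀ x y : X,
      |T^[i] f x - T^[i] f y| ≤ rho (T^[i]) :=
    fun i f hf x y => le_csSup (hrho_bdd i) ⟨f, hf, x, y, rfl⟩
  have hrho_nonneg : ∀ i, 0 ≤ rho (T^[i]) := fun i => by
    have := hrho_var i _ h0L1 (Classical.arbitrary X) (Classical.arbitrary X)
    exact le_trans (abs_nonneg _) this
  -- key lemma: small variation gives rho-weighted bound
  have key : ∀ u ∈ L1 X, ∀ r : ℝ, 0 ≤ r → (∀ x y : X, |u x - u y| ≤ r) →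
      ∀ x, |T u x - T' u x| ≤ r * D := by
    intro u hu r hr hvar x
    obtain ⟨y0, -, hy0⟩ := Finset.exists_min_image Finset.univ u
      ⟨Classical.arbitrary X, Finset.mem_univ _⟩
    set m := u y0 with hm
    rcases eq_or_lt_of_le hr with hr0 | hrpos
    · -- r = 0 : u is constant
      have hconst : u = fun _ => m + 0 * u y0 := by
        funext y
        have h1 := hvar y y0
        rw [← hr0] at h1
        have h2 := abs_nonneg (u y - u y0)
        have : u y - u y0 = 0 := by
          rcases abs_eq_zero.mp (le_antisymm h1 h2) with h
          exact h
        simp [hm]; linarith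
      have e1 : T u x = m := by
        rw [hMT, hconst, upperExp_affine (hMc x) m (le_refl (0:ℝ)) (fun _ => u y0)]
        ring
      have e2 : T' u x = m := by
        rw [hM'T, hconst, upperExp_affine (hM'c x) m (le_refl (0:ℝ)) (fun _ => u y0)]
        ring
      rw [e1, e2, ← hr0]
      simp
    · -- r > 0 : rescale
      set w : X → ℝ := fun y => (u y - m) / r with hw
      have hwL1 : w ∈ L1 X := by
        intro y
        constructor
        · exact div_nonneg (by linarith [hy0 y (Finset.mem_univ y)]) hr
        · rw [div_le_one hrpos]
          have := le_trans (le_abs_self (u y - m)) (hvar y y0)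
          linarith
      have hu' : u = fun y => m + r * w y := by
        funext y; rw [hw]; field_simp; ring
      have e1 : T u x = m + r * upperExp (M x) w := by
        rw [hMT]
        nth_rewrite 1 [hu']
        exact upperExp_affine (hMc x) m hr w
      have e2 : T' u x = m + r * upperExp (M' x) w := by
        rw [hM'T]
        nth_rewrite 1 [hu']
        exact upperExp_affine (hM'c x) m hr w
      have hcheb : |T w x - T' w x| ≤ D := hChebD w hwL1 x
      have hdiff : T u x - T' u x = r * (T w x - T' w x) := by
        rw [e1, e2, hMT, hM'T]; ring
      rw [hdiff, abs_mul, abs_of_pos hrpos]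
      exact mul_le_mul_of_nonneg_left hcheb hrpos.le
  -- one-step nonexpansiveness of T'
  have nonexp : ∀ a b : X → ℝ, ∀ c : ℝ, 0 ≤ c → (∀ y, |a y - b y| ≤ c) →
      ∀ x, |T' a x - T' b x| ≤ c := by
    intro a b c hc hab x
    have h1 : ∀ y, a y ≤ c + 1 * b y := fun y => by
      have := (abs_le.mp (hab y)).2; linarith
    have h2 : ∀ y, b y ≤ c + 1 * a y := fun y => by
      have := (abs_le.mp (hab y)).1; linarith
    have e1 : T' a x ≤ c + T' b x := by
      rw [hM'T, hM'T]
      calc upperExp (M' x) a ≤ upperExp (M' x) (fun y => c + 1 * b y) :=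
            upperExp_mono (hM'c x) h1
        _ = c + 1 * upperExp (M' x) b := upperExp_affine (hM'c x) c zero_le_one b
        _ = c + upperExp (M' x) b := by ring
    have e2 : T' b x ≤ c + T' a x := by
      rw [hM'T, hM'T]
      calc upperExp (M' x) b ≤ upperExp (M' x) (fun y => c + 1 * a y) :=
            upperExp_mono (hM'c x) h2
        _ = c + 1 * upperExp (M' x) a := upperExp_affine (hM'c x) c zero_le_one a
        _ = c + upperExp (M' x) a := by ring
    rw [abs_le]; constructor <;> linarith
  -- main induction
  have main : ∀ k, ∀ f ∈ L1 X, ∀ x : X,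
      |T^[k] f x - T'^[k] f x| ≤ (∑ i ∈ Finset.range k, rho (T^[i])) * D := by
    intro k
    induction k with
    | zero => intro f hf x; simp
    | succ k ih =>
      intro f hf x
      rw [Function.iterate_succ_apply' T, Function.iterate_succ_apply' T']
      have haL1 := hTiter k f hf
      have h1 : |T (T^[k] f) x - T' (T^[k] f) x| ≤ rho (T^[k]) * D :=
        key _ haL1 _ (hrho_nonneg k) (fun x y => hrho_var k f hf x y) x
      have h2 : |T' (T^[k] f) x - T' (T'^[k] f) x|
          ≤ (∑ i ∈ Finset.range k, rho (T^[i])) * D :=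
        nonexp _ _ _ (mul_nonneg (Finset.sum_nonneg fun i _ => hrho_nonneg i) hD0)
          (fun y => ih f hf y) x
      calc |T (T^[k] f) x - T' (T'^[k] f) x|
          ≤ |T (T^[k] f) x - T' (T^[k] f) x| + |T' (T^[k] f) x - T' (T'^[k] f) x| :=
            abs_sub_le _ _ _
        _ ≤ rho (T^[k]) * D + (∑ i ∈ Finset.range k, rho (T^[i])) * D :=
            add_le_add h1 h2
        _ = (∑ i ∈ Finset.range (k + 1), rho (T^[i])) * D := by
            rw [Finset.sum_range_succ]; ring
  -- conclude
  refine Real.sSup_le ?_ (mul_nonneg hD0 (Finset.sum_nonneg fun i _ => hrho_nonneg i))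
  rintro v ⟨f, hf, rfl⟩
  refine ciSup_le fun x => ?_
  calc |T^[n] f x - T'^[n] f x| ≤ (∑ i ∈ Finset.range n, rho (T^[i])) * D :=
        main n f hf x
    _ = D * ∑ i ∈ Finset.range n, rho (T^[i]) := mul_comm _ _
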